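/- Assume u_{0,1} and u_{0,2} both satisfy the small-ball assumption with the same constants c, α, r₀, and let λ ∈ ℝ. Then for every x ∈ E and every t with 0 < t ≤ r₀², |Φ_λ(x) − F_λ(x,t)| ≤ (2|λ|·d_{A₁}(x) + 2|1−λ|·d_{A₂}(x))·√t + C₂·t·(1+|log t|), where C₂ = max{1 + 4|log c| + 2d·log(4π), 2α + 2d}·(|λ| + |1−λ|). -/

import Mathlib

open MeasureTheory Metric Filter Topology

/-- The heat kernel `G_t(z) = (4πt)^{-d/2} exp(-‖z‖²/(4t))` on `EuclideanSpace ℝ (Fin d)`. -/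
noncomputable def heatKernel (d : ℕ) (t : ℝ) (z : EuclideanSpace ℝ (Fin d)) : ℝ :=
  (4 * Real.pi * t) ^ (-(d : ℝ) / 2) * Real.exp (-‖z‖ ^ 2 / (4 * t))

/-- The heat evolution `u(x,t) = ∫ G_t(x - y) dμ(y)` of a measure `μ`. -/
noncomputable def heatEvolution {d : ℕ} (μ : Measure (EuclideanSpace ℝ (Fin d)))
    (x : EuclideanSpace ℝ (Fin d)) (t : ℝ) : ℝ :=
  ∫ y, heatKernel d t (x - y) ∂μ

/-- The (topological) support of a Borel measure: points all of whose neighborhoods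
have positive measure. -/
def msupport {E : Type*} [TopologicalSpace E] [MeasurableSpace E] (μ : Measure E) : Set E :=
  {x | ∀ U ∈ nhds x, 0 < μ U}

/-- Small-ball assumption: `μ(B(x,r)) ≥ c·r^α` for every `x` in the support of `μ`
and every `r ∈ (0, r₀]`. -/
def SmallBall {d : ℕ} (μ : Measure (EuclideanSpace ℝ (Fin d))) (c α r₀ : ℝ) : Prop :=
  ∀ x ∈ msupport μ, ∀ r : ℝ, 0 < r → r ≤ r₀ →
    ENNReal.ofReal (c * r ^ α) ≤ μ (Metric.closedBall x r)

/-- The geometric distance potential `Φ_λ(x) = λ d_{A₁}(x)² + (1-λ) d_{A₂}(x)²`. -/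
noncomputable def distPotential {d : ℕ} (A₁ A₂ : Set (EuclideanSpace ℝ (Fin d))) (lam : ℝ)
    (x : EuclideanSpace ℝ (Fin d)) : ℝ :=
  lam * (Metric.infDist x A₁) ^ 2 + (1 - lam) * (Metric.infDist x A₂) ^ 2

/-- The rescaled mixed potential `F_λ(x,t) = -4t (λ log u₁(x,t) + (1-λ) log u₂(x,t))`. -/
noncomputable def mixedPotential {d : ℕ} (μ₁ μ₂ : Measure (EuclideanSpace ℝ (Fin d))) (lam : ℝ)
    (x : EuclideanSpace ℝ (Fin d)) (t : ℝ) : ℝ :=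
  -4 * t * (lam * Real.log (heatEvolution μ₁ x t) +
    (1 - lam) * Real.log (heatEvolution μ₂ x t))

lemma msupport_compl_null {d : ℕ} (μ : Measure (EuclideanSpace ℝ (Fin d))) :
    μ (msupport μ)ᶜ = 0 := by
  apply measure_null_of_locally_null
  intro x hx
  simp only [msupport, Set.mem_compl_iff, Set.mem_setOf_eq, not_forall] at hx
  obtain ⟨U, hU, hU0⟩ := hx
  exact ⟨U, nhdsWithin_le_nhds hU, le_zero_iff.mp (not_lt.mp hU0)⟩
lemma msupport_nonempty {d : ℕ} (μ : Measure (EuclideanSpace ℝ (Fin d)))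
    [IsProbabilityMeasure μ] : (msupport μ).Nonempty := by
  by_contra h
  rw [Set.not_nonempty_iff_eq_empty] at h
  have h0 := msupport_compl_null μ
  rw [h, Set.compl_empty] at h0
  simp [measure_univ] at h0
lemma heatKernel_cont {d : ℕ} (t : ℝ) (x : EuclideanSpace ℝ (Fin d)) :
    Continuous fun y => heatKernel d t (x - y) := by
  unfold heatKernel; fun_prop

lemma key_bound (d : ℕ) (μ : Measure (EuclideanSpace ℝ (Fin d)))
    [IsProbabilityMeasure μ] (A : Set (EuclideanSpace ℝ (Fin d)))
    (hA : A = msupport μ) (hAcpt : IsCompact A)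
    (c α r₀ : ℝ) (hc : 0 < c) (hα : 0 ≤ α) (hr₀ : 0 < r₀) (hSB : SmallBall μ c α r₀)
    (x : EuclideanSpace ℝ (Fin d)) (t : ℝ) (ht : 0 < t) (ht' : t ≤ r₀ ^ 2) :
    |Metric.infDist x A ^ 2 + 4 * t * Real.log (heatEvolution μ x t)| ≤
      2 * Metric.infDist x A * Real.sqrt t +
        max (1 + 4 * |Real.log c| + 2 * d * Real.log (4 * Real.pi)) (2 * α + 2 * d) *
          (t * (1 + |Real.log t|)) := by
  have hπ : (0:ℝ) < 4 * Real.pi := by positivity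
  have hπt : (0:ℝ) < 4 * Real.pi * t := by positivity
  have h4t : (0:ℝ) < 4 * t := by positivity
  set D := Metric.infDist x A with hD
  set s := Real.sqrt t with hsdef
  have hs : 0 < s := Real.sqrt_pos.mpr ht
  have hs2 : s ^ 2 = t := Real.sq_sqrt ht.le
  have hsr : s ≤ r₀ := by
    rw [hsdef, show r₀ = Real.sqrt (r₀ ^ 2) by rw [Real.sqrt_sq hr₀.le]]
    exact Real.sqrt_le_sqrt ht'
  have hAne : A.Nonempty := hA ▸ msupport_nonempty μ
  obtain ⟨a, haA, haD⟩ := hAcpt.exists_infDist_eq_dist hAne x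
  set K := (4 * Real.pi * t) ^ (-(d:ℝ) / 2) with hKdef
  have hK : 0 < K := Real.rpow_pos_of_pos hπt _
  have hD0 : 0 ≤ D := Metric.infDist_nonneg
  -- integrability
  have hcont := heatKernel_cont (d := d) t x
  have hker_nonneg : ∀ y, 0 ≤ heatKernel d t (x - y) := fun y => by
    unfold heatKernel; positivity
  have hint : Integrable (fun y => heatKernel d t (x - y)) μ := by
    refine Integrable.mono' (integrable_const K) hcont.aestronglyMeasurable ?_
    filter_upwards with y
    rw [Real.norm_eq_abs, abs_of_nonneg (hker_nonneg y)]
    unfold heatKernel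
    calc K * Real.exp (-‖x - y‖ ^ 2 / (4 * t)) ≤ K * 1 := by
          refine mul_le_mul_of_nonneg_left ?_ hK.le
          rw [Real.exp_le_one_iff]
          have : (0:ℝ) ≤ ‖x - y‖ ^ 2 / (4 * t) := by positivity
          rw [neg_div]; linarith
      _ = K := mul_one K
  set u := heatEvolution μ x t with hu
  -- upper bound for u
  have hae_mem : ∀ᵐ y ∂μ, y ∈ A := by
    rw [hA, ae_iff]
    exact msupport_compl_null μ
  have hker_le : ∀ y ∈ A, heatKernel d t (x - y) ≤ K * Real.exp (-D ^ 2 / (4 * t)) := by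
    intro y hy
    have hDle : D ≤ ‖x - y‖ := by
      rw [← dist_eq_norm]; exact Metric.infDist_le_dist_of_mem hy
    have h2 : D ^ 2 ≤ ‖x - y‖ ^ 2 := pow_le_pow_left₀ hD0 hDle 2
    unfold heatKernel
    refine mul_le_mul_of_nonneg_left (Real.exp_le_exp.mpr ?_) hK.le
    rw [neg_div, neg_div, neg_le_neg_iff]
    gcongr
  have hu_up : u ≤ K * Real.exp (-D ^ 2 / (4 * t)) := by
    calc u ≤ ∫ _y, K * Real.exp (-D ^ 2 / (4 * t)) ∂μ :=
          integral_mono_ae hint (integrable_const _) (hae_mem.mono fun y hy => hker_le y hy)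
      _ = K * Real.exp (-D ^ 2 / (4 * t)) := by simp
  -- lower bound for u
  have hker_ge : ∀ y ∈ Metric.closedBall a s,
      K * Real.exp (-(D + s) ^ 2 / (4 * t)) ≤ heatKernel d t (x - y) := by
    intro y hy
    have h1 : ‖x - y‖ ≤ D + s := by
      rw [← dist_eq_norm]
      calc dist x y ≤ dist x a + dist a y := dist_triangle x a y
        _ ≤ D + s := by
            rw [haD] at hD
            have := Metric.mem_closedBall.mp hy
            rw [dist_comm a y]
            rw [hD]; exact add_le_add le_rfl this
    have h2 : ‖x - y‖ ^ 2 ≤ (D + s) ^ 2 := pow_le_pow_left₀ (norm_nonneg _) h1 2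
    unfold heatKernel
    refine mul_le_mul_of_nonneg_left (Real.exp_le_exp.mpr ?_) hK.le
    rw [neg_div, neg_div, neg_le_neg_iff]
    gcongr
  have hμB : ENNReal.ofReal (c * s ^ α) ≤ μ (Metric.closedBall a s) := by
    apply hSB a (hA ▸ haA) s hs hsr
  have hcs : 0 < c * s ^ α := mul_pos hc (Real.rpow_pos_of_pos hs α)
  have hμBr : c * s ^ α ≤ (μ (Metric.closedBall a s)).toReal := by
    have := ENNReal.toReal_mono (measure_ne_top μ _) hμB
    rwa [ENNReal.toReal_ofReal hcs.le] at this
  have hEx : (0:ℝ) < K * Real.exp (-(D + s) ^ 2 / (4 * t)) := by positivity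
  have hu_lo : c * s ^ α * (K * Real.exp (-(D + s) ^ 2 / (4 * t))) ≤ u := by
    calc c * s ^ α * (K * Real.exp (-(D + s) ^ 2 / (4 * t)))
        ≤ (μ (Metric.closedBall a s)).toReal * (K * Real.exp (-(D + s) ^ 2 / (4 * t))) :=
          mul_le_mul_of_nonneg_right hμBr hEx.le
      _ = (K * Real.exp (-(D + s) ^ 2 / (4 * t))) * (μ (Metric.closedBall a s)).toReal := by ring
      _ ≤ ∫ y in Metric.closedBall a s, heatKernel d t (x - y) ∂μ :=
          setIntegral_ge_of_const_le_real measurableSet_closedBall (measure_ne_top μ _)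
            hker_ge hint.integrableOn
      _ ≤ u := setIntegral_le_integral hint (ae_of_all μ hker_nonneg)
  have hu_pos : 0 < u := lt_of_lt_of_le (mul_pos hcs hEx) hu_lo
  -- take logs
  have hlogK : Real.log K = (-(d:ℝ) / 2) * Real.log (4 * Real.pi * t) := Real.log_rpow hπt _
  have hlogπt : Real.log (4 * Real.pi * t) = Real.log (4 * Real.pi) + Real.log t :=
    Real.log_mul hπ.ne' ht.ne'
  have hlogs : Real.log s = Real.log t / 2 := Real.log_sqrt ht.le
  set lt' := Real.log t with hlt
  set lπ := Real.log (4 * Real.pi) with hlπ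
  set lc := Real.log c with hlc
  set L := Real.log u with hL
  have hlπ0 : 0 ≤ lπ := Real.log_nonneg (by nlinarith [Real.pi_gt_three])
  have hlog_up : L ≤ (-(d:ℝ) / 2) * (lπ + lt') + (-D ^ 2 / (4 * t)) := by
    have := Real.log_le_log hu_pos hu_up
    rwa [Real.log_mul hK.ne' (Real.exp_pos _).ne', Real.log_exp, hlogK, hlogπt] at this
  have hlog_lo : lc + α * (lt' / 2) + (-(d:ℝ) / 2) * (lπ + lt') + (-(D + s) ^ 2 / (4 * t)) ≤ L := by
    have := Real.log_le_log (mul_pos hcs hEx) hu_lo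
    rw [Real.log_mul hcs.ne' hEx.ne', Real.log_mul hc.ne' (Real.rpow_pos_of_pos hs α).ne',
      Real.log_rpow hs, Real.log_mul hK.ne' (Real.exp_pos _).ne', Real.log_exp,
      hlogK, hlogπt, hlogs] at this
    linarith
  -- multiply through by 4t
  have hup : 4 * t * L ≤ -(2 * (d:ℝ) * t * (lπ + lt')) - D ^ 2 := by
    calc 4 * t * L ≤ 4 * t * ((-(d:ℝ) / 2) * (lπ + lt') + (-D ^ 2 / (4 * t))) :=
          mul_le_mul_of_nonneg_left hlog_up h4t.le
      _ = -(2 * (d:ℝ) * t * (lπ + lt')) - D ^ 2 := by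
          field_simp
          ring
  have hlo : 4 * t * lc + 2 * α * t * lt' - 2 * (d:ℝ) * t * (lπ + lt') - (D + s) ^ 2 ≤
      4 * t * L := by
    calc 4 * t * lc + 2 * α * t * lt' - 2 * (d:ℝ) * t * (lπ + lt') - (D + s) ^ 2
        = 4 * t * (lc + α * (lt' / 2) + (-(d:ℝ) / 2) * (lπ + lt') + (-(D + s) ^ 2 / (4 * t))) := by
          field_simp
          ring
      _ ≤ 4 * t * L := mul_le_mul_of_nonneg_left hlog_lo h4t.le
  -- arithmetic
  set C := max (1 + 4 * |lc| + 2 * (d:ℝ) * lπ) (2 * α + 2 * d) with hC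
  have hC1 : 1 + 4 * |lc| + 2 * (d:ℝ) * lπ ≤ C := le_max_left _ _
  have hC2 : 2 * α + 2 * (d:ℝ) ≤ C := le_max_right _ _
  have hb1 : 4 * t * (-|lc|) ≤ 4 * t * lc :=
    mul_le_mul_of_nonneg_left (neg_abs_le lc) h4t.le
  have hb2 : 2 * α * t * (-|lt'|) ≤ 2 * α * t * lt' :=
    mul_le_mul_of_nonneg_left (neg_abs_le lt') (by positivity)
  have hb3 : 2 * (d:ℝ) * t * (-|lt'|) ≤ 2 * (d:ℝ) * t * lt' :=
    mul_le_mul_of_nonneg_left (neg_abs_le lt') (by positivity)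
  have hb3' : 2 * (d:ℝ) * t * lt' ≤ 2 * (d:ℝ) * t * |lt'| :=
    mul_le_mul_of_nonneg_left (le_abs_self lt') (by positivity)
  have hb4 : 0 ≤ 2 * (d:ℝ) * t * lπ := mul_nonneg (by positivity) hlπ0
  have hM1 : t * (1 + 4 * |lc| + 2 * (d:ℝ) * lπ) ≤ t * C :=
    mul_le_mul_of_nonneg_left hC1 ht.le
  have hM2 : (2 * α + 2 * (d:ℝ)) * t * |lt'| ≤ C * t * |lt'| :=
    mul_le_mul_of_nonneg_right (mul_le_mul_of_nonneg_right hC2 ht.le) (abs_nonneg _)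
  have hM3 : 2 * (d:ℝ) * t * |lt'| ≤ (2 * α + 2 * (d:ℝ)) * t * |lt'| :=
    mul_le_mul_of_nonneg_right (mul_le_mul_of_nonneg_right (by linarith) ht.le) (abs_nonneg _)
  have hDs : 0 ≤ D * s := mul_nonneg hD0 hs.le
  have hCt : 0 ≤ C * t * |lt'| := le_trans (by positivity) hM2
  have habs : 0 ≤ t * |lc| := by positivity
  rw [abs_le]
  constructor
  · linarith [hlo, hb1, hb2, hb3', hb4, hM1, hM2, hM3, hDs, hs2, habs, ht.le]
  · linarith [hup, hb3, hb4, hM1, hM2, hM3, hDs, ht.le, hCt, habs]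

theorem laplace_varadhan_value_convergence
    (d : ℕ) (hd : 1 ≤ d)
    (μ₁ μ₂ : Measure (EuclideanSpace ℝ (Fin d)))
    [IsProbabilityMeasure μ₁] [IsProbabilityMeasure μ₂]
    (A₁ A₂ : Set (EuclideanSpace ℝ (Fin d)))
    (hA₁ : A₁ = msupport μ₁) (hA₂ : A₂ = msupport μ₂)
    (hA₁cpt : IsCompact A₁) (hA₂cpt : IsCompact A₂)
    (c α r₀ : ℝ) (hc : 0 < c) (hα : 0 ≤ α) (hr₀ : 0 < r₀)
    (hSB₁ : SmallBall μ₁ c α r₀) (hSB₂ : SmallBall μ₂ c α r₀)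
    (lam : ℝ)
    (x : EuclideanSpace ℝ (Fin d)) (t : ℝ) (ht : 0 < t) (ht' : t ≤ r₀ ^ 2) :
    |distPotential A₁ A₂ lam x - mixedPotential μ₁ μ₂ lam x t| ≤
      (2 * |lam| * Metric.infDist x A₁ + 2 * |1 - lam| * Metric.infDist x A₂) * Real.sqrt t +
        (max (1 + 4 * |Real.log c| + 2 * d * Real.log (4 * Real.pi)) (2 * α + 2 * d) *
          (|lam| + |1 - lam|)) * (t * (1 + |Real.log t|)) := by
  have h1 := key_bound d μ₁ A₁ hA₁ hA₁cpt c α r₀ hc hα hr₀ hSB₁ x t ht ht'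
  have h2 := key_bound d μ₂ A₂ hA₂ hA₂cpt c α r₀ hc hα hr₀ hSB₂ x t ht ht'
  have hdecomp : distPotential A₁ A₂ lam x - mixedPotential μ₁ μ₂ lam x t =
      lam * (Metric.infDist x A₁ ^ 2 + 4 * t * Real.log (heatEvolution μ₁ x t)) +
        (1 - lam) * (Metric.infDist x A₂ ^ 2 + 4 * t * Real.log (heatEvolution μ₂ x t)) := by
    unfold distPotential mixedPotential; ring
  rw [hdecomp]
  calc |lam * (Metric.infDist x A₁ ^ 2 + 4 * t * Real.log (heatEvolution μ₁ x t)) +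
        (1 - lam) * (Metric.infDist x A₂ ^ 2 + 4 * t * Real.log (heatEvolution μ₂ x t))|
      ≤ |lam| * |Metric.infDist x A₁ ^ 2 + 4 * t * Real.log (heatEvolution μ₁ x t)| +
        |1 - lam| * |Metric.infDist x A₂ ^ 2 + 4 * t * Real.log (heatEvolution μ₂ x t)| := by
        refine (abs_add_le _ _).trans ?_
        rw [abs_mul, abs_mul]
    _ ≤ |lam| * (2 * Metric.infDist x A₁ * Real.sqrt t +
          max (1 + 4 * |Real.log c| + 2 * d * Real.log (4 * Real.pi)) (2 * α + 2 * d) *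
            (t * (1 + |Real.log t|))) +
        |1 - lam| * (2 * Metric.infDist x A₂ * Real.sqrt t +
          max (1 + 4 * |Real.log c| + 2 * d * Real.log (4 * Real.pi)) (2 * α + 2 * d) *
            (t * (1 + |Real.log t|))) :=
        add_le_add (mul_le_mul_of_nonneg_left h1 (abs_nonneg _))
          (mul_le_mul_of_nonneg_left h2 (abs_nonneg _))
    _ = (2 * |lam| * Metric.infDist x A₁ + 2 * |1 - lam| * Metric.infDist x A₂) * Real.sqrt t +
        (max (1 + 4 * |Real.log c| + 2 * d * Real.log (4 * Real.pi)) (2 * α + 2 * d) *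
          (|lam| + |1 - lam|)) * (t * (1 + |Real.log t|)) := by ring
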